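/- Let K : ℝ → ℝ be even with K, ξK(ξ), ξ²K(ξ) ∈ L¹(ℝ), let k, a ∈ ℝ with k ≠ 0, let g : ℝ → ℂ be twice continuously differentiable and 2π-periodic, h : ℝ → ℂ continuously differentiable and 2π-periodic, and let n ∈ ℤ. Then K̂(q) = ∫_ℝ K(ξ)e^{−iqξ}dξ is twice differentiable, and the n-th Fourier coefficient of the 2π-periodic function θ ↦ (K∗_θh)(θ) − (K₁∗_θ(a g' + k h'))(θ) + ½ a k (K₂∗_θ g'')(θ) equals Ω'(nk)·ĥ(n) + ½ n a Ω''(nk)·ĝ(n), where Ω(q) = qK̂(q). -/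

import Mathlib

open MeasureTheory Real

/-- The Fourier transform `K̂(q) = ∫ K(ξ) e^{−iqξ} dξ` of `K`. -/
noncomputable def fourierKernel (K : ℝ → ℝ) (q : ℝ) : ℂ :=
  ∫ ξ : ℝ, (K ξ : ℂ) * Complex.exp (-Complex.I * q * ξ)

/-- The dispersion function `Ω(q) = q K̂(q)`. -/
noncomputable def dispersion (K : ℝ → ℝ) (q : ℝ) : ℂ :=
  (q : ℂ) * fourierKernel K q

section Aux

lemma norm_exp_aux (n : ℤ) (θ : ℝ) : ‖Complex.exp (-Complex.I * n * θ)‖ = 1 := by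
  have : -Complex.I * n * θ = ((-(n * θ) : ℝ) : ℂ) * Complex.I := by push_cast; ring
  rw [this, Complex.norm_exp_ofReal_mul_I]

lemma exp_periodic_aux (n : ℤ) (x : ℝ) :
    Complex.exp (-Complex.I * n * ((x + 2 * π : ℝ) : ℂ)) = Complex.exp (-Complex.I * n * x) := by
  rw [show (-Complex.I * n * ((x + 2 * π : ℝ) : ℂ))
      = -Complex.I * n * x + ((-n : ℤ) : ℂ) * (2 * π * Complex.I) by push_cast; ring,
    Complex.exp_add, Complex.exp_int_mul_two_pi_mul_I, mul_one]

lemma periodic_mul_exp {φ : ℝ → ℂ} (hφp : Function.Periodic φ (2 * π)) (n : ℤ) :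
    Function.Periodic (fun θ : ℝ => φ θ * Complex.exp (-Complex.I * n * θ)) (2 * π) := by
  intro x
  simp only
  rw [hφp x, exp_periodic_aux]

lemma bound_of_periodic {φ : ℝ → ℂ} (hφ : Continuous φ) (hφp : Function.Periodic φ (2 * π)) :
    ∃ M : ℝ, ∀ x, ‖φ x‖ ≤ M := by
  obtain ⟨M, hM⟩ := (isCompact_Icc (a := (0 : ℝ)) (b := 2 * π)).exists_bound_of_continuousOn
    hφ.continuousOn
  refine ⟨M, fun x => ?_⟩
  obtain ⟨y, hy, hxy⟩ := hφp.exists_mem_Ico₀ (by positivity) x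
  rw [hxy]
  exact hM y ⟨hy.1, hy.2.le⟩

lemma periodic_of_hasDerivAt {f f' : ℝ → ℂ} (hf : ∀ x, HasDerivAt f (f' x) x)
    (hp : Function.Periodic f (2 * π)) : Function.Periodic f' (2 * π) := by
  intro x
  have h1 : HasDerivAt (fun y : ℝ => f (y + 2 * π)) (f' (x + 2 * π)) x :=
    HasDerivAt.comp_add_const x (2 * π) (hf (x + 2 * π))
  have h2 : (fun y : ℝ => f (y + 2 * π)) = f := funext hp
  rw [h2] at h1
  exact h1.unique (hf x)

lemma continuous_of_hasDerivAt {f f' : ℝ → ℂ} (hf : ∀ x, HasDerivAt f (f' x) x) :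
    Continuous f := by
  have : Differentiable ℝ f := fun x => (hf x).differentiableAt
  exact this.continuous

lemma shift_integral {φ : ℝ → ℂ} (hφ : Continuous φ) (hφp : Function.Periodic φ (2 * π))
    (n : ℤ) (c : ℝ) :
    ∫ θ in (0:ℝ)..(2 * π), φ (θ - c) * Complex.exp (-Complex.I * n * θ)
      = Complex.exp (-Complex.I * n * c) *
          ∫ θ in (0:ℝ)..(2 * π), φ θ * Complex.exp (-Complex.I * n * θ) := by
  have key : ∀ θ : ℝ, φ (θ - c) * Complex.exp (-Complex.I * n * θ)
      = Complex.exp (-Complex.I * n * c) *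
        (φ (θ - c) * Complex.exp (-Complex.I * n * ((θ - c : ℝ) : ℂ))) := by
    intro θ
    have hexp : Complex.exp (-Complex.I * n * θ)
        = Complex.exp (-Complex.I * n * c) * Complex.exp (-Complex.I * n * ((θ - c : ℝ) : ℂ)) := by
      rw [← Complex.exp_add]
      congr 1
      push_cast
      ring
    rw [hexp]
    ring
  simp_rw [key]
  rw [intervalIntegral.integral_const_mul]
  congr 1
  have hsub := intervalIntegral.integral_comp_sub_right
    (a := (0:ℝ)) (b := 2 * π) (fun θ : ℝ => φ θ * Complex.exp (-Complex.I * n * θ)) c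
  rw [hsub, show (0:ℝ) - c = -c by ring, show 2 * π - c = -c + 2 * π by ring,
    (periodic_mul_exp hφp n).intervalIntegral_add_eq (-c) 0, zero_add]

lemma conv_coeff {w : ℝ → ℝ} (hw : Integrable w) {φ : ℝ → ℂ} (hφ : Continuous φ)
    (hφp : Function.Periodic φ (2 * π)) (k : ℝ) (n : ℤ) :
    ∫ θ in (0:ℝ)..(2 * π),
        (∫ ξ : ℝ, (w ξ : ℂ) * φ (θ - k * ξ)) * Complex.exp (-Complex.I * n * θ)
      = (∫ ξ : ℝ, (w ξ : ℂ) * Complex.exp (-Complex.I * n * ((k * ξ : ℝ) : ℂ)))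
          * ∫ θ in (0:ℝ)..(2 * π), φ θ * Complex.exp (-Complex.I * n * θ) := by
  obtain ⟨M, hM⟩ := bound_of_periodic hφ hφp
  set μ : Measure ℝ := volume.restrict (Set.Ioc (0:ℝ) (2 * π)) with hμ
  have hfin : IsFiniteMeasure μ := by
    constructor
    rw [hμ, Measure.restrict_apply_univ]
    exact measure_Ioc_lt_top
  have h2π : (0:ℝ) ≤ 2 * π := by positivity
  have hmeas : AEStronglyMeasurable
      (fun p : ℝ × ℝ => (w p.2 : ℂ) * φ (p.1 - k * p.2) * Complex.exp (-Complex.I * n * p.1))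
      (μ.prod volume) := by
    have h1 : AEStronglyMeasurable (fun p : ℝ × ℝ => (w p.2 : ℂ)) (μ.prod volume) :=
      (Complex.continuous_ofReal.comp_aestronglyMeasurable hw.1).comp_quasiMeasurePreserving
        Measure.quasiMeasurePreserving_snd
    have h2 : Continuous fun p : ℝ × ℝ => φ (p.1 - k * p.2) :=
      hφ.comp (continuous_fst.sub (continuous_const.mul continuous_snd))
    have h3 : Continuous fun p : ℝ × ℝ => Complex.exp (-Complex.I * n * p.1) :=
      Complex.continuous_exp.comp (continuous_const.mul (Complex.continuous_ofReal.comp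
        continuous_fst))
    exact (h1.mul h2.aestronglyMeasurable).mul h3.aestronglyMeasurable
  have hbound : Integrable (fun p : ℝ × ℝ => (1:ℝ) * (M * |w p.2|)) (μ.prod volume) :=
    (integrable_const (1:ℝ)).mul_prod (hw.norm.const_mul M)
  have hint : Integrable
      (fun p : ℝ × ℝ => (w p.2 : ℂ) * φ (p.1 - k * p.2) * Complex.exp (-Complex.I * n * p.1))
      (μ.prod volume) := by
    refine hbound.mono' hmeas ?_
    filter_upwards with p
    rw [norm_mul, norm_mul, norm_exp_aux, mul_one, Complex.norm_real, Real.norm_eq_abs,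
      one_mul, mul_comm M]
    exact mul_le_mul_of_nonneg_left (hM _) (abs_nonneg _)
  rw [intervalIntegral.integral_of_le h2π]
  calc ∫ θ in Set.Ioc (0:ℝ) (2 * π),
        (∫ ξ : ℝ, (w ξ : ℂ) * φ (θ - k * ξ)) * Complex.exp (-Complex.I * n * θ)
      = ∫ θ, (∫ ξ : ℝ, (w ξ : ℂ) * φ (θ - k * ξ) * Complex.exp (-Complex.I * n * θ)) ∂μ := by
        refine integral_congr_ae (Filter.Eventually.of_forall fun θ => ?_)
        exact (integral_mul_const _ _).symm
    _ = ∫ ξ : ℝ, (∫ θ, (w ξ : ℂ) * φ (θ - k * ξ) * Complex.exp (-Complex.I * n * θ) ∂μ) :=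
        integral_integral_swap hint
    _ = ∫ ξ : ℝ, (w ξ : ℂ) *
          (∫ θ, φ (θ - k * ξ) * Complex.exp (-Complex.I * n * θ) ∂μ) := by
        refine integral_congr_ae (Filter.Eventually.of_forall fun ξ => ?_)
        beta_reduce
        rw [← integral_const_mul]
        exact integral_congr_ae (Filter.Eventually.of_forall fun θ => (mul_assoc _ _ _))
    _ = ∫ ξ : ℝ, (w ξ : ℂ) *
          (Complex.exp (-Complex.I * n * ((k * ξ : ℝ) : ℂ)) *
            ∫ θ in (0:ℝ)..(2 * π), φ θ * Complex.exp (-Complex.I * n * θ)) := by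
        refine integral_congr_ae (Filter.Eventually.of_forall fun ξ => ?_)
        beta_reduce
        congr 1
        rw [← intervalIntegral.integral_of_le h2π]
        exact shift_integral hφ hφp n (k * ξ)
    _ = _ := by
        simp_rw [← mul_assoc]
        rw [integral_mul_const]

lemma deriv_coeff {φ φ' : ℝ → ℂ} (hφ : ∀ x, HasDerivAt φ (φ' x) x) (hφ' : Continuous φ')
    (hφp : Function.Periodic φ (2 * π)) (n : ℤ) :
    ∫ θ in (0:ℝ)..(2 * π), φ' θ * Complex.exp (-Complex.I * n * θ)
      = (Complex.I * n) * ∫ θ in (0:ℝ)..(2 * π), φ θ * Complex.exp (-Complex.I * n * θ) := by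
  set c : ℂ := -Complex.I * n with hc
  have hφcont : Continuous φ := continuous_of_hasDerivAt hφ
  have hE : ∀ x : ℝ, HasDerivAt (fun θ : ℝ => Complex.exp (c * θ)) (c * Complex.exp (c * x)) x := by
    intro x
    have h0 : HasDerivAt (fun z : ℂ => Complex.exp (c * z))
        (Complex.exp (c * (x:ℂ)) * (c * 1)) (x : ℂ) :=
      (Complex.hasDerivAt_exp _).comp _ ((hasDerivAt_id _).const_mul c)
    have h1 : HasDerivAt (fun z : ℂ => Complex.exp (c * z)) (c * Complex.exp (c * (x:ℂ))) (x:ℂ) :=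
      h0.congr_deriv (by ring)
    exact h1.comp_ofReal
  have hEc : Continuous fun θ : ℝ => Complex.exp (c * θ) :=
    Complex.continuous_exp.comp (continuous_const.mul Complex.continuous_ofReal)
  have hG : ∀ x : ℝ, HasDerivAt (fun θ : ℝ => φ θ * Complex.exp (c * θ))
      (φ' x * Complex.exp (c * x) + φ x * (c * Complex.exp (c * x))) x :=
    fun x => (hφ x).mul (hE x)
  have hGint : IntervalIntegrable
      (fun x : ℝ => φ' x * Complex.exp (c * x) + φ x * (c * Complex.exp (c * x)))
      volume 0 (2 * π) :=
    ((hφ'.mul hEc).add (hφcont.mul (continuous_const.mul hEc))).intervalIntegrable _ _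
  have hsub := intervalIntegral.integral_eq_sub_of_hasDerivAt
    (f := fun θ : ℝ => φ θ * Complex.exp (c * θ)) (fun x _ => hG x) hGint
  have hzero : φ (2 * π) * Complex.exp (c * ((2 * π : ℝ) : ℂ))
      - φ 0 * Complex.exp (c * ((0 : ℝ) : ℂ)) = 0 := by
    have h1 : φ (2 * π) = φ 0 := by
      have := hφp 0
      rwa [zero_add] at this
    have h2 : Complex.exp (c * ((2 * π : ℝ) : ℂ)) = 1 := by
      rw [show c * ((2 * π : ℝ) : ℂ) = ((-n : ℤ) : ℂ) * (2 * π * Complex.I) by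
        rw [hc]; push_cast; ring]
      exact Complex.exp_int_mul_two_pi_mul_I _
    rw [h1, h2]
    norm_num
  rw [hzero] at hsub
  have hsplit : ∫ θ in (0:ℝ)..(2 * π),
      (φ' θ * Complex.exp (c * θ) + φ θ * (c * Complex.exp (c * θ)))
      = (∫ θ in (0:ℝ)..(2 * π), φ' θ * Complex.exp (c * θ))
        + c * ∫ θ in (0:ℝ)..(2 * π), φ θ * Complex.exp (c * θ) := by
    rw [intervalIntegral.integral_add ((hφ'.fun_mul hEc).intervalIntegrable _ _)
      ((hφcont.fun_mul (continuous_const.fun_mul hEc)).intervalIntegrable _ _)]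
    congr 1
    rw [← intervalIntegral.integral_const_mul]
    refine intervalIntegral.integral_congr fun θ _ => ?_
    ring
  rw [hsplit] at hsub
  have hkey : ∫ θ in (0:ℝ)..(2 * π), φ' θ * Complex.exp (c * θ)
      = -c * ∫ θ in (0:ℝ)..(2 * π), φ θ * Complex.exp (c * θ) := by
    linear_combination hsub
  rw [hkey, hc]
  ring

lemma conv_continuous {w : ℝ → ℝ} (hw : Integrable w) {φ : ℝ → ℂ} (hφ : Continuous φ)
    (hφp : Function.Periodic φ (2 * π)) (k : ℝ) :
    Continuous fun θ : ℝ => ∫ ξ : ℝ, (w ξ : ℂ) * φ (θ - k * ξ) := by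
  obtain ⟨M, hM⟩ := bound_of_periodic hφ hφp
  refine continuous_of_dominated (bound := fun ξ => |w ξ| * M) (fun θ => ?_) (fun θ => ?_)
    (hw.norm.mul_const M) ?_
  · exact (Complex.continuous_ofReal.comp_aestronglyMeasurable hw.1).mul
      (hφ.comp (continuous_const.sub (continuous_const.mul continuous_id))).aestronglyMeasurable
  · filter_upwards with ξ
    rw [norm_mul, Complex.norm_real, Real.norm_eq_abs]
    exact mul_le_mul_of_nonneg_left (hM _) (abs_nonneg _)
  · filter_upwards with ξ
    exact continuous_const.mul (hφ.comp (continuous_id.sub continuous_const))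

lemma fourierKernel_eq (K : ℝ → ℝ) (q : ℝ) :
    fourierKernel K q = FourierTransform.fourier (fun x : ℝ => (K x : ℂ)) (q / (2 * π)) := by
  rw [Real.fourier_real_eq_integral_exp_smul]
  unfold fourierKernel
  refine integral_congr_ae (Filter.Eventually.of_forall fun x => ?_)
  have hπ : (π : ℝ) ≠ 0 := Real.pi_ne_zero
  have harg : -2 * π * x * (q / (2 * π)) = -(q * x) := by field_simp
  beta_reduce
  rw [smul_eq_mul, harg, mul_comm]
  congr 1
  push_cast
  ring

lemma hasDerivAt_fourierKernel {K : ℝ → ℝ} (hK : Integrable K)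
    (hK1 : Integrable fun ξ => ξ * K ξ) (q : ℝ) :
    HasDerivAt (fourierKernel K)
      (-Complex.I * fourierKernel (fun ξ => ξ * K ξ) q) q := by
  have hπ : (π : ℝ) ≠ 0 := Real.pi_ne_zero
  have hKc : Integrable fun x : ℝ => (K x : ℂ) := hK.ofReal
  have hKc1 : Integrable fun x : ℝ => x • ((K x : ℝ) : ℂ) := by
    refine hK1.ofReal.congr (Filter.Eventually.of_forall fun x => ?_)
    beta_reduce
    rw [Complex.real_smul]
    norm_cast
  have h1 := Real.hasDerivAt_fourier hKc hKc1 (q / (2 * π))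
  have hdiv : HasDerivAt (fun x : ℝ => x / (2 * π)) (1 / (2 * π)) q := by
    simpa using (hasDerivAt_id q).div_const (2 * π)
  have heq : fourierKernel K = fun q : ℝ => FourierTransform.fourier (fun x : ℝ => (K x : ℂ)) (q / (2 * π)) :=
    funext (fourierKernel_eq K)
  rw [heq]
  have hcomp : HasDerivAt (fun q : ℝ => FourierTransform.fourier (fun x : ℝ => (K x : ℂ)) (q / (2 * π)))
      ((1 / (2 * π) : ℝ) •
        FourierTransform.fourier (fun x : ℝ => (-2 * π * Complex.I * x) • (K x : ℂ)) (q / (2 * π))) q := by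
    exact HasDerivAt.scomp q h1 hdiv
  have hval : (1 / (2 * π) : ℝ) •
      FourierTransform.fourier (fun x : ℝ => (-2 * π * Complex.I * x) • (K x : ℂ)) (q / (2 * π))
      = -Complex.I * fourierKernel (fun ξ => ξ * K ξ) q := by
    rw [Complex.real_smul, Real.fourier_real_eq_integral_exp_smul]
    have hptwise : ∀ v : ℝ, Complex.exp (↑(-2 * π * v * (q / (2 * π))) * Complex.I) •
        ((-2 * π * Complex.I * v) • (K v : ℂ))
        = (-2 * (π:ℂ) * Complex.I) * (((v * K v : ℝ) : ℂ) * Complex.exp (-Complex.I * q * v)) := by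
      intro v
      have harg : -2 * π * v * (q / (2 * π)) = -(q * v) := by field_simp
      rw [smul_eq_mul, smul_eq_mul, harg]
      rw [show ((-(q * v) : ℝ) : ℂ) * Complex.I = -Complex.I * q * v by push_cast; ring]
      push_cast
      ring
    simp_rw [hptwise]
    rw [integral_const_mul]
    unfold fourierKernel
    have hπc : ((π : ℝ) : ℂ) ≠ 0 := Complex.ofReal_ne_zero.2 hπ
    push_cast
    field_simp
    congr 1
    refine integral_congr_ae (Filter.Eventually.of_forall fun a => ?_)
    beta_reduce
    ring_nf
  exact hcomp.congr_deriv hval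

end Aux

/-- The key Fourier coefficient computation of Appendix A: the `n`-th Fourier
coefficient of `K∗_θ h − K₁∗_θ(a g' + k h') + ½ a k K₂∗_θ g''` equals
`Ω'(nk)·ĥ(n) + ½ n a Ω''(nk)·ĝ(n)` where `Ω(q) = qK̂(q)`. -/
theorem appendix_fourier_coefficient
    (K : ℝ → ℝ) (hKeven : ∀ x, K (-x) = K x)
    (hK : Integrable K) (hK1 : Integrable (fun ξ => ξ * K ξ))
    (hK2 : Integrable (fun ξ => ξ ^ 2 * K ξ))
    (k a : ℝ) (hk : k ≠ 0)
    (g g' g'' : ℝ → ℂ)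
    (hg : ∀ x, HasDerivAt g (g' x) x) (hg' : ∀ x, HasDerivAt g' (g'' x) x)
    (hg'' : Continuous g'') (hgp : Function.Periodic g (2 * π))
    (h h' : ℝ → ℂ)
    (hh : ∀ x, HasDerivAt h (h' x) x) (hh' : Continuous h')
    (hhp : Function.Periodic h (2 * π)) (n : ℤ) :
    (Differentiable ℝ (fourierKernel K) ∧ Differentiable ℝ (deriv (fourierKernel K))) ∧
    (1 / (2 * π) : ℂ) *
        ∫ θ in (0:ℝ)..(2 * π),
          ((∫ ξ : ℝ, (K ξ : ℂ) * h (θ - k * ξ))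
            - (∫ ξ : ℝ, ((ξ * K ξ : ℝ) : ℂ) * ((a : ℂ) * g' (θ - k * ξ) + (k : ℂ) * h' (θ - k * ξ)))
            + ((a * k / 2 : ℝ) : ℂ) * ∫ ξ : ℝ, ((ξ ^ 2 * K ξ : ℝ) : ℂ) * g'' (θ - k * ξ))
            * Complex.exp (-Complex.I * n * θ)
      = deriv (dispersion K) ((n : ℝ) * k) *
          ((1 / (2 * π) : ℂ) * ∫ θ in (0:ℝ)..(2 * π), h θ * Complex.exp (-Complex.I * n * θ))
        + ((n : ℂ) * (a : ℂ) / 2) * deriv (deriv (dispersion K)) ((n : ℝ) * k) *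
          ((1 / (2 * π) : ℂ) * ∫ θ in (0:ℝ)..(2 * π), g θ * Complex.exp (-Complex.I * n * θ)) := by
  have hgc : Continuous g := continuous_of_hasDerivAt hg
  have hg'c : Continuous g' := continuous_of_hasDerivAt hg'
  have hhc : Continuous h := continuous_of_hasDerivAt hh
  have hg'p : Function.Periodic g' (2 * π) := periodic_of_hasDerivAt hg hgp
  have hh'p : Function.Periodic h' (2 * π) := periodic_of_hasDerivAt hh hhp
  have hg''p : Function.Periodic g'' (2 * π) := periodic_of_hasDerivAt hg' hg'p
  have hK2' : Integrable fun ξ => ξ * (ξ * K ξ) :=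
    hK2.congr (Filter.Eventually.of_forall fun ξ => by ring)
  have hD1 : ∀ q : ℝ, HasDerivAt (fourierKernel K)
      (-Complex.I * fourierKernel (fun ξ => ξ * K ξ) q) q :=
    fun q => hasDerivAt_fourierKernel hK hK1 q
  have hD2 : ∀ q : ℝ, HasDerivAt (fourierKernel (fun ξ => ξ * K ξ))
      (-Complex.I * fourierKernel (fun ξ => ξ * (ξ * K ξ)) q) q :=
    fun q => hasDerivAt_fourierKernel hK1 hK2' q
  have hderiv1 : deriv (fourierKernel K)
      = fun q => -Complex.I * fourierKernel (fun ξ => ξ * K ξ) q :=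
    funext fun q => (hD1 q).deriv
  constructor
  · constructor
    · exact fun q => (hD1 q).differentiableAt
    · rw [hderiv1]
      exact fun q => ((hD2 q).const_mul (-Complex.I)).differentiableAt
  have hcoe : ∀ q : ℝ, HasDerivAt (fun q : ℝ => (q : ℂ)) 1 q := fun q => by
    simpa using (hasDerivAt_id q).ofReal_comp
  have hΩ1 : ∀ q : ℝ, HasDerivAt (dispersion K)
      (fourierKernel K q + (q : ℂ) * (-Complex.I * fourierKernel (fun ξ => ξ * K ξ) q)) q := by
    intro q
    have h0 := (hcoe q).mul (hD1 q)
    exact h0.congr_deriv (by ring)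
  have hΩd : deriv (dispersion K) = fun q : ℝ =>
      fourierKernel K q + (q : ℂ) * (-Complex.I * fourierKernel (fun ξ => ξ * K ξ) q) :=
    funext fun q => (hΩ1 q).deriv
  have hΩ2 : ∀ q : ℝ, HasDerivAt (deriv (dispersion K))
      (-Complex.I * fourierKernel (fun ξ => ξ * K ξ) q
        + (-Complex.I * fourierKernel (fun ξ => ξ * K ξ) q
          + (q : ℂ) * (-Complex.I * (-Complex.I * fourierKernel (fun ξ => ξ * (ξ * K ξ)) q)))) q := by
    intro q
    rw [hΩd]
    have h0 := (hD1 q).add ((hcoe q).mul ((hD2 q).const_mul (-Complex.I)))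
    exact h0.congr_deriv (by ring)
  -- abbreviations
  set A : ℂ := ∫ θ in (0:ℝ)..(2 * π), h θ * Complex.exp (-Complex.I * n * θ) with hA
  set B : ℂ := ∫ θ in (0:ℝ)..(2 * π), g θ * Complex.exp (-Complex.I * n * θ) with hB
  set c0 : ℂ := fourierKernel K ((n : ℝ) * k) with hc0
  set c1 : ℂ := fourierKernel (fun ξ => ξ * K ξ) ((n : ℝ) * k) with hc1
  set c2 : ℂ := fourierKernel (fun ξ => ξ * (ξ * K ξ)) ((n : ℝ) * k) with hc2
  -- the second auxiliary periodic function
  have hφ2c : Continuous fun x : ℝ => (a : ℂ) * g' x + (k : ℂ) * h' x :=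
    (continuous_const.mul hg'c).add (continuous_const.mul hh')
  have hφ2p : Function.Periodic (fun x : ℝ => (a : ℂ) * g' x + (k : ℂ) * h' x) (2 * π) := by
    intro x
    simp only [hg'p x, hh'p x]
  -- continuity of the envelopes
  have hEc : Continuous fun θ : ℝ => Complex.exp (-Complex.I * n * θ) :=
    Complex.continuous_exp.comp (continuous_const.mul Complex.continuous_ofReal)
  have hXc : Continuous fun θ : ℝ => ∫ ξ : ℝ, (K ξ : ℂ) * h (θ - k * ξ) :=
    conv_continuous hK hhc hhp k
  have hYc : Continuous fun θ : ℝ =>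
      ∫ ξ : ℝ, ((ξ * K ξ : ℝ) : ℂ) * ((a : ℂ) * g' (θ - k * ξ) + (k : ℂ) * h' (θ - k * ξ)) :=
    conv_continuous hK1 hφ2c hφ2p k
  have hZc : Continuous fun θ : ℝ => ∫ ξ : ℝ, ((ξ ^ 2 * K ξ : ℝ) : ℂ) * g'' (θ - k * ξ) :=
    conv_continuous hK2 hg'' hg''p k
  -- convolution Fourier coefficients
  have kernel_eq : ∀ w : ℝ → ℝ,
      (∫ ξ : ℝ, (w ξ : ℂ) * Complex.exp (-Complex.I * n * ((k * ξ : ℝ) : ℂ)))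
        = fourierKernel w ((n : ℝ) * k) := by
    intro w
    unfold fourierKernel
    refine integral_congr_ae (Filter.Eventually.of_forall fun ξ => ?_)
    beta_reduce
    congr 2
    push_cast
    ring
  have key1 : ∫ θ in (0:ℝ)..(2 * π),
      (∫ ξ : ℝ, (K ξ : ℂ) * h (θ - k * ξ)) * Complex.exp (-Complex.I * n * θ) = c0 * A := by
    rw [hc0, ← kernel_eq K, hA]
    exact conv_coeff hK hhc hhp k n
  have key2 : ∫ θ in (0:ℝ)..(2 * π),
      (∫ ξ : ℝ, ((ξ * K ξ : ℝ) : ℂ) * ((a : ℂ) * g' (θ - k * ξ) + (k : ℂ) * h' (θ - k * ξ)))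
        * Complex.exp (-Complex.I * n * θ)
      = c1 * ∫ θ in (0:ℝ)..(2 * π), ((a : ℂ) * g' θ + (k : ℂ) * h' θ)
          * Complex.exp (-Complex.I * n * θ) := by
    rw [hc1, ← kernel_eq (fun ξ => ξ * K ξ)]
    exact conv_coeff hK1 hφ2c hφ2p k n
  have key3 : ∫ θ in (0:ℝ)..(2 * π),
      (∫ ξ : ℝ, ((ξ ^ 2 * K ξ : ℝ) : ℂ) * g'' (θ - k * ξ)) * Complex.exp (-Complex.I * n * θ)
      = c2 * ∫ θ in (0:ℝ)..(2 * π), g'' θ * Complex.exp (-Complex.I * n * θ) := by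
    have hc2' : fourierKernel (fun ξ => ξ ^ 2 * K ξ) ((n : ℝ) * k) = c2 := by
      rw [hc2]
      unfold fourierKernel
      refine integral_congr_ae (Filter.Eventually.of_forall fun ξ => ?_)
      beta_reduce
      push_cast
      ring
    rw [← hc2', ← kernel_eq (fun ξ => ξ ^ 2 * K ξ)]
    exact conv_coeff hK2 hg'' hg''p k n
  -- Fourier coefficients of derivatives
  have dgc : ∫ θ in (0:ℝ)..(2 * π), g' θ * Complex.exp (-Complex.I * n * θ)
      = (Complex.I * n) * B := by
    rw [hB]; exact deriv_coeff hg hg'c hgp n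
  have dhc : ∫ θ in (0:ℝ)..(2 * π), h' θ * Complex.exp (-Complex.I * n * θ)
      = (Complex.I * n) * A := by
    rw [hA]; exact deriv_coeff hh hh' hhp n
  have dgc2 : ∫ θ in (0:ℝ)..(2 * π), g'' θ * Complex.exp (-Complex.I * n * θ)
      = (Complex.I * n) * ((Complex.I * n) * B) := by
    rw [← dgc]; exact deriv_coeff hg' hg'' hg'p n
  -- split the inner periodic combination
  have hsplit2 : ∫ θ in (0:ℝ)..(2 * π), ((a : ℂ) * g' θ + (k : ℂ) * h' θ)
        * Complex.exp (-Complex.I * n * θ)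
      = (a : ℂ) * ((Complex.I * n) * B) + (k : ℂ) * ((Complex.I * n) * A) := by
    rw [← dgc, ← dhc]
    have e : ∀ θ : ℝ, ((a : ℂ) * g' θ + (k : ℂ) * h' θ) * Complex.exp (-Complex.I * n * θ)
        = (a : ℂ) * (g' θ * Complex.exp (-Complex.I * n * θ))
          + (k : ℂ) * (h' θ * Complex.exp (-Complex.I * n * θ)) := fun θ => by ring
    simp_rw [e]
    rw [intervalIntegral.integral_add ((continuous_const.fun_mul (hg'c.fun_mul hEc)).intervalIntegrable _ _)
      ((continuous_const.fun_mul (hh'.fun_mul hEc)).intervalIntegrable _ _),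
      intervalIntegral.integral_const_mul, intervalIntegral.integral_const_mul]
  -- split the full integral
  have main : ∫ θ in (0:ℝ)..(2 * π),
      ((∫ ξ : ℝ, (K ξ : ℂ) * h (θ - k * ξ))
        - (∫ ξ : ℝ, ((ξ * K ξ : ℝ) : ℂ) * ((a : ℂ) * g' (θ - k * ξ) + (k : ℂ) * h' (θ - k * ξ)))
        + ((a * k / 2 : ℝ) : ℂ) * ∫ ξ : ℝ, ((ξ ^ 2 * K ξ : ℝ) : ℂ) * g'' (θ - k * ξ))
        * Complex.exp (-Complex.I * n * θ)
      = (∫ θ in (0:ℝ)..(2 * π),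
          (∫ ξ : ℝ, (K ξ : ℂ) * h (θ - k * ξ)) * Complex.exp (-Complex.I * n * θ))
        - (∫ θ in (0:ℝ)..(2 * π),
          (∫ ξ : ℝ, ((ξ * K ξ : ℝ) : ℂ) * ((a : ℂ) * g' (θ - k * ξ) + (k : ℂ) * h' (θ - k * ξ)))
            * Complex.exp (-Complex.I * n * θ))
        + ((a * k / 2 : ℝ) : ℂ) * ∫ θ in (0:ℝ)..(2 * π),
          (∫ ξ : ℝ, ((ξ ^ 2 * K ξ : ℝ) : ℂ) * g'' (θ - k * ξ))
            * Complex.exp (-Complex.I * n * θ) := by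
    have e : ∀ θ : ℝ,
        ((∫ ξ : ℝ, (K ξ : ℂ) * h (θ - k * ξ))
          - (∫ ξ : ℝ, ((ξ * K ξ : ℝ) : ℂ) * ((a : ℂ) * g' (θ - k * ξ) + (k : ℂ) * h' (θ - k * ξ)))
          + ((a * k / 2 : ℝ) : ℂ) * ∫ ξ : ℝ, ((ξ ^ 2 * K ξ : ℝ) : ℂ) * g'' (θ - k * ξ))
          * Complex.exp (-Complex.I * n * θ)
        = ((∫ ξ : ℝ, (K ξ : ℂ) * h (θ - k * ξ)) * Complex.exp (-Complex.I * n * θ)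
            - (∫ ξ : ℝ, ((ξ * K ξ : ℝ) : ℂ) * ((a : ℂ) * g' (θ - k * ξ) + (k : ℂ) * h' (θ - k * ξ)))
              * Complex.exp (-Complex.I * n * θ))
          + ((a * k / 2 : ℝ) : ℂ) * ((∫ ξ : ℝ, ((ξ ^ 2 * K ξ : ℝ) : ℂ) * g'' (θ - k * ξ))
              * Complex.exp (-Complex.I * n * θ)) := fun θ => by ring
    simp_rw [e]
    rw [intervalIntegral.integral_add
      (((hXc.fun_mul hEc).intervalIntegrable _ _).sub ((hYc.fun_mul hEc).intervalIntegrable _ _))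
      ((continuous_const.fun_mul (hZc.fun_mul hEc)).intervalIntegrable _ _),
      intervalIntegral.integral_sub ((hXc.fun_mul hEc).intervalIntegrable _ _)
        ((hYc.fun_mul hEc).intervalIntegrable _ _),
      intervalIntegral.integral_const_mul]
  rw [main, key1, key2, key3, hsplit2, dgc2, (hΩ1 ((n : ℝ) * k)).deriv, (hΩ2 ((n : ℝ) * k)).deriv,
    ← hc0, ← hc1, ← hc2]
  push_cast
  ring
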